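/- Fix a real α ∈ (0,1) and an integer p ≥ 3. Define H : ℂ → ℝ by H(0) = 0 and H(z) = |z|^{2/(1−α) − p} · Im(z^p) for z ≠ 0. Then for every natural number k with k < 2/(1−α), the function H is k-times continuously differentiable on all of ℂ (regarded as ℝ²). In particular, since 2/(1−α) > 2, H is C². -/

import Mathlib

set_option maxHeartbeats 1000000
set_option maxRecDepth 8000

open Complex Filter

noncomputable section HamiltonianAux

variable {F : Type} [NormedAddCommGroup F] [NormedSpace ℂ F]

/-- Auxiliary class of functions: finite sums of `normSq z ^ a • (z^m * conj z^l) • v`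
with total homogeneity degree `2a+m+l = d`. -/
def HamGood (d : ℝ) (f : ℂ → F) : Prop :=
  ∃ (ι : Type) (_ : Fintype ι) (a : ι → ℝ) (m l : ι → ℕ) (v : ι → F),
    (∀ i, v i = 0 ∨ 2 * a i + m i + l i = d) ∧ f 0 = 0 ∧
    ∀ z : ℂ, z ≠ 0 →
      f z = ∑ i, (((normSq z ^ a i : ℝ) : ℂ) * z ^ m i * (starRingEnd ℂ z) ^ l i) • v i

lemma hamCoef_abs {a : ℝ} {m l : ℕ} {d : ℝ} (hd : 2*a + m + l = d) {z : ℂ} (hz : z ≠ 0) :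
    ‖((normSq z ^ a : ℝ) : ℂ) * z ^ m * (starRingEnd ℂ z) ^ l‖ = ‖z‖ ^ d := by
  have h0 : (0:ℝ) < ‖z‖ := norm_pos_iff.mpr hz
  have h1 : normSq z ^ a = ‖z‖ ^ (2 * a) := by
    rw [normSq_eq_norm_sq, ← Real.rpow_natCast ‖z‖ 2, ← Real.rpow_mul h0.le]
    norm_num
  rw [norm_mul, norm_mul, norm_pow, norm_pow, Complex.norm_real, Complex.norm_conj,
    Real.norm_of_nonneg (Real.rpow_nonneg (normSq_nonneg z) a), h1,
    ← Real.rpow_natCast ‖z‖ m,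
    ← Real.rpow_natCast ‖z‖ l, ← Real.rpow_add h0, ← Real.rpow_add h0, ← hd]

lemma hamGood_bound {d : ℝ} (hd : 0 < d) {f : ℂ → F} (hf : HamGood d f) :
    ∃ M : ℝ, ∀ z : ℂ, ‖f z‖ ≤ M * ‖z‖ ^ d := by
  obtain ⟨ι, _, a, m, l, v, hdeg, h0, hfz⟩ := hf
  refine ⟨∑ i, ‖v i‖, fun z => ?_⟩
  rcases eq_or_ne z 0 with rfl | hz
  · simp [h0, Real.zero_rpow hd.ne']
  · rw [hfz z hz]
    calc ‖∑ i, (((normSq z ^ a i : ℝ) : ℂ) * z ^ m i * (starRingEnd ℂ z) ^ l i) • v i‖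
        ≤ ∑ i, ‖(((normSq z ^ a i : ℝ) : ℂ) * z ^ m i * (starRingEnd ℂ z) ^ l i) • v i‖ :=
          norm_sum_le _ _
      _ ≤ ∑ i, ‖v i‖ * ‖z‖ ^ d := by
          refine Finset.sum_le_sum fun i _ => ?_
          rcases eq_or_ne (v i) 0 with h | h
          · simp [h]
          · rw [norm_smul,
              hamCoef_abs ((hdeg i).resolve_left h) hz, mul_comm]
      _ = (∑ i, ‖v i‖) * ‖z‖ ^ d := by rw [← Finset.sum_mul]

lemma hamTendsto_rpow {d : ℝ} (hd : 0 < d) (M : ℝ) :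
    Tendsto (fun z : ℂ => M * ‖z‖ ^ d) (nhds 0) (nhds 0) := by
  have h1 : Tendsto (fun z : ℂ => ‖z‖ ^ d) (nhds 0) (nhds 0) := by
    have h2 : ContinuousAt (fun x : ℝ => x ^ d) 0 :=
      Real.continuousAt_rpow_const 0 d (Or.inr hd.le)
    have := h2.tendsto.comp (tendsto_norm_zero (E := ℂ))
    simpa [Function.comp_def, Real.zero_rpow hd.ne'] using this
  simpa using h1.const_mul M

/-- `h ↦ h • v` as a continuous ℝ-linear map. -/
def HamT1 (v : F) : ℂ →L[ℝ] F := (ContinuousLinearMap.id ℝ ℂ).smulRight v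

/-- `h ↦ conj h • v` as a continuous ℝ-linear map. -/
def HamT2 (v : F) : ℂ →L[ℝ] F :=
  (Complex.conjCLE : ℂ ≃L[ℝ] ℂ).toContinuousLinearMap.smulRight v

lemma hamConj_hasFDerivAt {z : ℂ} : HasFDerivAt (fun w => starRingEnd ℂ w)
    ((Complex.conjCLE : ℂ ≃L[ℝ] ℂ).toContinuousLinearMap) z := by
  exact (Complex.conjCLE : ℂ ≃L[ℝ] ℂ).toContinuousLinearMap.hasFDerivAt (x := z)

lemma hamTerm_hasFDerivAt (a : ℝ) (m l : ℕ) (v : F) {z : ℂ} (hz : z ≠ 0) :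
    HasFDerivAt (fun w : ℂ => (((normSq w ^ a : ℝ) : ℂ) * w ^ m * (starRingEnd ℂ w) ^ l) • v)
      ( (((normSq z ^ (a-1) : ℝ) : ℂ) * z ^ m * (starRingEnd ℂ z) ^ (l+1)) • ((a:ℂ) • HamT1 v)
      + (((normSq z ^ (a-1) : ℝ) : ℂ) * z ^ (m+1) * (starRingEnd ℂ z) ^ l) • ((a:ℂ) • HamT2 v)
      + (((normSq z ^ a : ℝ) : ℂ) * z ^ (m-1) * (starRingEnd ℂ z) ^ l) • ((m:ℂ) • HamT1 v)
      + (((normSq z ^ a : ℝ) : ℂ) * z ^ m * (starRingEnd ℂ z) ^ (l-1)) • ((l:ℂ) • HamT2 v) )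
      z := by
  have hnsq : (0:ℝ) < normSq z := normSq_pos.mpr hz
  have hn : HasFDerivAt (fun w : ℂ => normSq w)
      (z.re • Complex.reCLM + z.re • Complex.reCLM +
        (z.im • Complex.imCLM + z.im • Complex.imCLM)) z := by
    simpa only [normSq_apply, Pi.mul_def, Pi.add_def, Complex.reCLM_apply,
      Complex.imCLM_apply] using
      (Complex.reCLM.hasFDerivAt.mul Complex.reCLM.hasFDerivAt).add
      (Complex.imCLM.hasFDerivAt.mul Complex.imCLM.hasFDerivAt)
  have h2 := hn.rpow_const (p := a) (Or.inl hnsq.ne')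
  have h3 := Complex.ofRealCLM.hasFDerivAt.comp z h2
  have h4 : HasFDerivAt (fun w : ℂ => w ^ m)
      ((ContinuousLinearMap.smulRight (1 : ℂ →L[ℂ] ℂ)
        ((m : ℂ) * z ^ (m-1))).restrictScalars ℝ) z :=
    (hasDerivAt_pow m z).hasFDerivAt.restrictScalars ℝ
  have h5 : HasFDerivAt (fun w : ℂ => (starRingEnd ℂ w) ^ l)
      (((ContinuousLinearMap.smulRight (1 : ℂ →L[ℂ] ℂ)
          ((l : ℂ) * (starRingEnd ℂ z) ^ (l-1))).restrictScalars ℝ).comp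
        (Complex.conjCLE : ℂ ≃L[ℝ] ℂ).toContinuousLinearMap) z :=
    ((hasDerivAt_pow l (starRingEnd ℂ z)).hasFDerivAt.restrictScalars ℝ).comp z
      hamConj_hasFDerivAt
  have H := (((h3.mul h4).mul h5).smul_const v)
  refine H.congr_fderiv ?_
  ext h
  simp only [ContinuousLinearMap.add_apply, ContinuousLinearMap.smul_apply,
    ContinuousLinearMap.coe_comp', Function.comp_apply, ContinuousLinearMap.coe_restrictScalars',
    ContinuousLinearMap.smulRight_apply, ContinuousLinearMap.one_apply,
    ContinuousLinearMap.coe_smul', Pi.smul_apply, Complex.ofRealCLM_apply,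
    Complex.reCLM_apply, Complex.imCLM_apply, ContinuousLinearMap.id_apply,
    ContinuousLinearEquiv.coe_coe, Complex.conjCLE_apply, HamT1, HamT2, smul_eq_mul,
    smul_smul, Pi.mul_apply]
  rw [← add_smul, ← add_smul, ← add_smul]
  congr 1
  have key : ((z.re * h.re + z.re * h.re + (z.im * h.im + z.im * h.im) : ℝ) : ℂ)
      = (starRingEnd ℂ z) * h + z * (starRingEnd ℂ h) := by
    apply Complex.ext <;> simp <;> ring
  rw [Complex.ofReal_mul, Complex.ofReal_mul, key]
  ring

lemma hamT1_zero : HamT1 (0 : F) = 0 := by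
  ext h; simp [HamT1]

lemma hamT2_zero : HamT2 (0 : F) = 0 := by
  ext h; simp [HamT2]

lemma hamGood_continuous {d : ℝ} (hd : 0 < d) {f : ℂ → F} (hf : HamGood d f) :
    Continuous f := by
  obtain ⟨M, hM⟩ := hamGood_bound hd hf
  obtain ⟨ι, _, a, m, l, v, hdeg, h0, hfz⟩ := hf
  rw [continuous_iff_continuousAt]
  intro z
  rcases eq_or_ne z 0 with rfl | hz
  · unfold ContinuousAt
    rw [h0]
    exact squeeze_zero_norm hM (hamTendsto_rpow hd M)
  · have hopen : {w : ℂ | w ≠ 0} ∈ nhds z := isOpen_compl_singleton.mem_nhds hz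
    have hg : ContinuousAt (fun w : ℂ =>
        ∑ i, (((normSq w ^ a i : ℝ) : ℂ) * w ^ m i * (starRingEnd ℂ w) ^ l i) • v i) z := by
      refine tendsto_finset_sum _ fun i _ => ContinuousAt.smul ?_ continuousAt_const
      have hns : ContinuousAt (fun w : ℂ => ((normSq w ^ a i : ℝ) : ℂ)) z :=
        Complex.continuous_ofReal.continuousAt.comp
          ((Real.continuousAt_rpow_const _ _ (Or.inl (normSq_pos.mpr hz).ne')).comp
            continuous_normSq.continuousAt)
      exact (hns.mul (continuousAt_pow _ _)).mul
        (((continuous_pow (l i)).comp continuous_conj).continuousAt)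
    exact hg.congr (by
      filter_upwards [hopen] with w hw
      exact (hfz w hw).symm)

lemma hamGood_fderiv {d : ℝ} (hd : 1 < d) {f : ℂ → F} (hf : HamGood d f) :
    Differentiable ℝ f ∧ HamGood (d-1) (fderiv ℝ f) := by
  obtain ⟨M, hM0⟩ := hamGood_bound (by linarith : (0:ℝ) < d) hf
  have hM : ∀ z : ℂ, ‖f z‖ ≤ |M| * ‖z‖ ^ d := fun z =>
    (hM0 z).trans (mul_le_mul_of_nonneg_right (le_abs_self M) (by positivity))
  obtain ⟨ι, _, a, m, l, v, hdeg, h0, hfz⟩ := hf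
  -- derivative at nonzero points
  have hDz : ∀ z : ℂ, z ≠ 0 → HasFDerivAt f
      (∑ i,
        ( (((normSq z ^ (a i - 1) : ℝ) : ℂ) * z ^ m i * (starRingEnd ℂ z) ^ (l i + 1)) •
            ((a i : ℂ) • HamT1 (v i))
        + (((normSq z ^ (a i - 1) : ℝ) : ℂ) * z ^ (m i + 1) * (starRingEnd ℂ z) ^ l i) •
            ((a i : ℂ) • HamT2 (v i))
        + (((normSq z ^ a i : ℝ) : ℂ) * z ^ (m i - 1) * (starRingEnd ℂ z) ^ l i) •
            ((m i : ℂ) • HamT1 (v i))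
        + (((normSq z ^ a i : ℝ) : ℂ) * z ^ m i * (starRingEnd ℂ z) ^ (l i - 1)) •
            ((l i : ℂ) • HamT2 (v i)))) z := by
    intro z hz
    have hopen : {w : ℂ | w ≠ 0} ∈ nhds z := isOpen_compl_singleton.mem_nhds hz
    have hsum : HasFDerivAt (fun w : ℂ =>
        ∑ i, (((normSq w ^ a i : ℝ) : ℂ) * w ^ m i * (starRingEnd ℂ w) ^ l i) • v i) _ z :=
      HasFDerivAt.fun_sum (fun i _ => hamTerm_hasFDerivAt (a i) (m i) (l i) (v i) hz)
    exact hsum.congr_of_eventuallyEq (by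
      filter_upwards [hopen] with w hw
      exact hfz w hw)
  -- derivative at zero
  have hD0 : HasFDerivAt f (0 : ℂ →L[ℝ] F) 0 := by
    rw [hasFDerivAt_iff_tendsto]
    have hbound : ∀ z : ℂ, ‖z - 0‖⁻¹ * ‖f z - f 0 - (0 : ℂ →L[ℝ] F) (z - 0)‖
        ≤ |M| * ‖z‖ ^ (d - 1) := by
      intro z
      rcases eq_or_ne z 0 with rfl | hz
      · simp [h0]
        positivity
      · have hzpos : (0:ℝ) < ‖z‖ := norm_pos_iff.mpr hz
        simp only [sub_zero, h0, ContinuousLinearMap.zero_apply]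
        have h1 : ‖z‖⁻¹ * ‖f z‖ ≤ ‖z‖⁻¹ * (|M| * ‖z‖ ^ d) :=
          mul_le_mul_of_nonneg_left (hM z) (by positivity)
        refine h1.trans (le_of_eq ?_)
        rw [show d - 1 = d + (-1) by ring, Real.rpow_add hzpos, Real.rpow_neg_one]
        ring
    refine squeeze_zero (fun z => by positivity) hbound ?_
    exact hamTendsto_rpow (by linarith) |M|
  have hdiff : Differentiable ℝ f := by
    intro z
    rcases eq_or_ne z 0 with rfl | hz
    · exact hD0.differentiableAt
    · exact (hDz z hz).differentiableAt
  refine ⟨hdiff, ?_⟩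
  refine ⟨ι × Fin 4, inferInstance,
    fun q => ![a q.1 - 1, a q.1 - 1, a q.1, a q.1] q.2,
    fun q => ![m q.1, m q.1 + 1, m q.1 - 1, m q.1] q.2,
    fun q => ![l q.1 + 1, l q.1, l q.1, l q.1 - 1] q.2,
    fun q => ![(a q.1 : ℂ) • HamT1 (v q.1), (a q.1 : ℂ) • HamT2 (v q.1),
      (m q.1 : ℂ) • HamT1 (v q.1), (l q.1 : ℂ) • HamT2 (v q.1)] q.2,
    ?_, ?_, ?_⟩
  · rintro ⟨i, j⟩
    rcases eq_or_ne (v i) 0 with hv | hv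
    · left
      fin_cases j <;> simp [hv, hamT1_zero, hamT2_zero]
    · have hdi := (hdeg i).resolve_left hv
      fin_cases j
      · right; simp; push_cast; push_cast at hdi; linarith
      · right; simp; push_cast; push_cast at hdi; linarith
      · rcases Nat.eq_zero_or_pos (m i) with hm | hm
        · left; simp [hm, hamT1_zero, hamT2_zero]
        · right
          simp only [Matrix.cons_val_two, Matrix.tail_cons, Matrix.head_cons, Fin.isValue,
            Matrix.cons_val_zero, Matrix.cons_val_one, Fin.mk_zero, Fin.mk_one]
          simp
          rw [Nat.cast_sub hm]
          push_cast; push_cast at hdi; linarith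
      · rcases Nat.eq_zero_or_pos (l i) with hl | hl
        · left; simp [hl, hamT1_zero, hamT2_zero]
        · right
          simp
          rw [Nat.cast_sub hl]
          push_cast; push_cast at hdi; linarith
  · exact hD0.fderiv
  · intro z hz
    rw [(hDz z hz).fderiv, Fintype.sum_prod_type]
    refine Finset.sum_congr rfl fun i _ => ?_
    rw [Fin.sum_univ_four]
    simp

lemma hamGood_contDiff : ∀ (k : ℕ) {F : Type} [NormedAddCommGroup F] [NormedSpace ℂ F]
    {d : ℝ} {f : ℂ → F}, (k : ℝ) < d → HamGood d f → ContDiff ℝ k f := by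
  intro k
  induction k with
  | zero =>
    intro F _ _ d f hk hf
    exact contDiff_zero.2 (hamGood_continuous (by exact_mod_cast hk) hf)
  | succ n ih =>
    intro F _ _ d f hk hf
    have hn : (n : ℝ) + 1 < d := by push_cast at hk; linarith
    have hd1 : 1 < d := by
      have : (0:ℝ) ≤ n := Nat.cast_nonneg n
      linarith
    obtain ⟨hdiff, hgood⟩ := hamGood_fderiv hd1 hf
    have hcast : ((n + 1 : ℕ) : WithTop ℕ∞) = (n : WithTop ℕ∞) + 1 := by push_cast; ring
    rw [hcast, contDiff_succ_iff_fderiv]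
    refine ⟨hdiff, ?_, ih (by linarith) hgood⟩
    intro h
    exact absurd h (by simp)

end HamiltonianAux

/-- Regularity of the slowed-down Hamiltonian: for `α ∈ (0,1)` and `p ≥ 3`,
the function `H(z) = |z|^{2/(1-α) - p} Im(z^p)` (with `H(0) = 0`) is `C^k`
on all of `ℂ ≅ ℝ²` for every natural `k < 2/(1-α)`; in particular it is
`C²` since `2/(1-α) > 2`. -/
theorem hamiltonian_regularity
    (α : ℝ) (hα : α ∈ Set.Ioo (0 : ℝ) 1)
    (p : ℤ) (hp : 3 ≤ p)
    (H : ℂ → ℝ)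
    (hH0 : H 0 = 0)
    (hH : ∀ z : ℂ, z ≠ 0 →
      H z = ‖z‖ ^ (2 / (1 - α) - (p : ℝ)) * (z ^ p).im) :
    (∀ k : ℕ, (k : ℝ) < 2 / (1 - α) → ContDiff ℝ k H) ∧ ContDiff ℝ 2 H := by
  obtain ⟨hα0, hα1⟩ := hα
  set β : ℝ := 2 / (1 - α) with hβ
  have h1α : (0:ℝ) < 1 - α := by linarith
  have hβ2 : 2 < β := by
    rw [hβ, lt_div_iff₀ h1α]; nlinarith
  set a0 : ℝ := (β - p) / 2 with ha0
  set G : ℂ → ℂ := fun z => ((Complex.normSq z ^ a0 : ℝ) : ℂ) * z ^ p.toNat with hG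
  have hptn : (1:ℕ) ≤ p.toNat := by omega
  have hptc : ((p.toNat : ℤ) : ℝ) = (p : ℝ) := by
    rw [Int.toNat_of_nonneg (by omega)]
  have hG0 : G 0 = 0 := by
    simp [hG, zero_pow (by omega : p.toNat ≠ 0)]
  have hGood : HamGood β G := by
    refine ⟨Unit, inferInstance, fun _ => a0, fun _ => p.toNat, fun _ => 0, fun _ => (1:ℂ),
      ?_, hG0, ?_⟩
    · intro i
      right
      push_cast [ha0]
      push_cast at hptc
      rw [hptc]
      ring
    · intro z hz
      simp [hG]
  have hMain : ∀ k : ℕ, (k : ℝ) < β → ContDiff ℝ k H := by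
    intro k hk
    have hGk : ContDiff ℝ k G := hamGood_contDiff k hk hGood
    have hHG : H = fun z => (G z).im := by
      funext z
      rcases eq_or_ne z 0 with rfl | hz
      · simp [hH0, hG0]
      · rw [hH z hz]
        have habs : (0:ℝ) < ‖z‖ := norm_pos_iff.mpr hz
        have hzp : z ^ p = z ^ p.toNat := by
          rw [← zpow_natCast z p.toNat]
          congr 1
          omega
        have hns : Complex.normSq z ^ a0 = ‖z‖ ^ (β - (p:ℝ)) := by
          rw [Complex.normSq_eq_norm_sq, ← Real.rpow_natCast ‖z‖ 2,
            ← Real.rpow_mul habs.le, ha0]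
          congr 1
          push_cast
          ring
        simp only [hG, hns, hzp]
        simp [Complex.mul_im]
    rw [hHG]
    exact Complex.imCLM.contDiff.comp hGk
  refine ⟨hMain, ?_⟩
  have := hMain 2 (by exact_mod_cast hβ2)
  exact_mod_cast this
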